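/- arXiv:1512.09278 — 2 statements merged into one kernel-verified Lean document; each statement's English description precedes it below -/
import Mathlib

section
/- For all integers A ≥ 1, B ≥ 1 and every complex u ≠ 1, the second derivative of u ↦ f_{A,B}(u) at u equals A·B·[ f_{A−1,B−1}(u) + f_{A−1,B+1}(u) + f_{A+1,B−1}(u) + f_{A+1,B+1}(u) − 2 f_{A−1,B}(u) − 2 f_{A,B−1}(u) − 2 f_{A+1,B}(u) − 2 f_{A,B+1}(u) + 4 f_{A,B}(u) ]. -/
/-- `f A B u` is the contour integral
`(1/(2πi)) ∮_{|z|=r} (1 + 1/(u+z−1))^A (1 − 1/z)^B dz`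
over a circle of radius `0 < r < |1−u|` centered at `0` (here `r = |1−u|/2`);
the value is independent of the choice of such `r`. -/
noncomputable def f (A B : ℕ) (u : ℂ) : ℂ :=
  (2 * Real.pi * Complex.I)⁻¹ *
    (∮ z in C(0, ‖1 - u‖ / 2), (1 + (u + z - 1)⁻¹) ^ A * (1 - z⁻¹) ^ B)

open Complex Metric Set Topology Filter


noncomputable def gg (u z : ℂ) : ℂ := 1 + (u + z - 1)⁻¹
noncomputable def hh (z : ℂ) : ℂ := 1 - z⁻¹
noncomputable def FF (A B : ℕ) (u z : ℂ) : ℂ := gg u z ^ A * hh z ^ B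

lemma aux_ne {u z : ℂ} (h : ‖z‖ < ‖1 - u‖) : u + z - 1 ≠ 0 := by
  intro h0
  have hz : z = 1 - u := by linear_combination h0
  rw [hz] at h; exact lt_irrefl _ h

lemma hasDerivAt_gg_z (u : ℂ) {z : ℂ} (h : u + z - 1 ≠ 0) :
    HasDerivAt (gg u) (-(gg u z - 1) ^ 2) z := by
  have h1 : HasDerivAt (fun z : ℂ => u + z - 1) 1 z := by
    simpa using ((hasDerivAt_id z).const_add u).sub_const 1
  have h2 := (h1.inv h).const_add 1
  refine h2.congr_deriv (Eq.symm ?_)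
  simp only [gg, add_sub_cancel_left]
  field_simp

lemma hasDerivAt_gg_u {u : ℂ} (z : ℂ) (h : u + z - 1 ≠ 0) :
    HasDerivAt (fun u => gg u z) (-(gg u z - 1) ^ 2) u := by
  have h1 : HasDerivAt (fun u : ℂ => u + z - 1) 1 u := by
    simpa using ((hasDerivAt_id u).add_const z).sub_const 1
  have h2 := (h1.inv h).const_add 1
  refine h2.congr_deriv (Eq.symm ?_)
  simp only [gg, add_sub_cancel_left]
  field_simp

lemma hasDerivAt_hh {z : ℂ} (h : z ≠ 0) :
    HasDerivAt hh ((hh z - 1) ^ 2) z := by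
  have h2 := ((hasDerivAt_id z).inv h).const_sub 1
  refine h2.congr_deriv (Eq.symm ?_)
  simp only [hh, id_eq]
  field_simp
  ring

lemma hasDerivAt_FF_z (A B : ℕ) (u : ℂ) {z : ℂ} (h0 : z ≠ 0) (h1 : u + z - 1 ≠ 0) :
    HasDerivAt (fun z => FF A B u z)
      ((↑A * gg u z ^ (A - 1) * (-(gg u z - 1) ^ 2)) * hh z ^ B
        + gg u z ^ A * (↑B * hh z ^ (B - 1) * ((hh z - 1) ^ 2))) z :=
  ((hasDerivAt_gg_z u h1).pow A).mul ((hasDerivAt_hh h0).pow B)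

lemma hasDerivAt_FF_u (A B : ℕ) {u z : ℂ} (h1 : u + z - 1 ≠ 0) :
    HasDerivAt (fun u => FF A B u z)
      ((↑A * gg u z ^ (A - 1) * (-(gg u z - 1) ^ 2)) * hh z ^ B) u :=
  ((hasDerivAt_gg_u z h1).pow A).mul_const (hh z ^ B)

lemma circleIntegrable_FF (A B : ℕ) {u : ℂ} {r : ℝ} (h0 : 0 ≤ r)
    (hr : r < ‖1 - u‖) : CircleIntegrable (FF A B u) 0 r := by
  rcases h0.eq_or_lt with h|h
  · rw [← h]; exact circleIntegrable_zero_radius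
  apply ContinuousOn.circleIntegrable h0
  intro z hz
  rw [mem_sphere_zero_iff_norm] at hz
  have hz0 : z ≠ 0 := by
    intro h'; rw [h', norm_zero] at hz; exact h.ne hz
  have hz1 : u + z - 1 ≠ 0 := aux_ne (by rw [hz]; exact hr)
  exact (hasDerivAt_FF_z A B u hz0 hz1).differentiableAt.continuousAt.continuousWithinAt

lemma expandA (A B : ℕ) (u z : ℂ) :
    (↑A * gg u z ^ (A - 1) * (-(gg u z - 1) ^ 2)) * hh z ^ B
      = -(A : ℂ) * (FF (A + 1) B u z - (2 * FF A B u z - FF (A - 1) B u z)) := by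
  cases A with
  | zero => simp
  | succ a =>
      simp only [FF, Nat.add_sub_cancel]
      push_cast
      ring

lemma expandB (A B : ℕ) (u z : ℂ) :
    gg u z ^ A * (↑B * hh z ^ (B - 1) * ((hh z - 1) ^ 2))
      = (B : ℂ) * (FF A (B + 1) u z - (2 * FF A B u z - FF A (B - 1) u z)) := by
  cases B with
  | zero => simp
  | succ b =>
      simp only [FF, Nat.add_sub_cancel]
      push_cast
      ring

lemma oint_comb (A B : ℕ) {u : ℂ} {r : ℝ} (h0 : 0 ≤ r) (hr : r < ‖1 - u‖) :
    (∮ z in C(0, r), (FF (A + 1) B u z - (2 * FF A B u z - FF (A - 1) B u z)))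
      = (∮ z in C(0, r), FF (A + 1) B u z)
        - (2 * (∮ z in C(0, r), FF A B u z) - ∮ z in C(0, r), FF (A - 1) B u z) := by
  have i1 := circleIntegrable_FF (A + 1) B h0 hr
  have i2 := circleIntegrable_FF A B h0 hr
  have i3 := circleIntegrable_FF (A - 1) B h0 hr
  have i2' : CircleIntegrable (fun z => 2 * FF A B u z) 0 r := by
    unfold CircleIntegrable at i2 ⊢; exact i2.const_mul 2
  have i4 : CircleIntegrable (fun z => 2 * FF A B u z - FF (A - 1) B u z) 0 r := by
    unfold CircleIntegrable at i2' i3 ⊢; exact i2'.sub i3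
  rw [circleIntegral.integral_sub i1 i4, circleIntegral.integral_sub i2' i3,
    circleIntegral.integral_const_mul]


lemma cont_gg {x : ℂ} {r : ℝ} (hx : ∀ θ : ℝ, x + circleMap 0 r θ - 1 ≠ 0) :
    Continuous fun θ : ℝ => gg x (circleMap 0 r θ) := by
  simp only [gg]
  exact continuous_const.add (((continuous_const.add (continuous_circleMap 0 r)).sub
    continuous_const).inv₀ hx)

lemma cont_hh {r : ℝ} (hr : r ≠ 0) : Continuous fun θ : ℝ => hh (circleMap 0 r θ) := by
  simp only [hh]
  exact continuous_const.sub ((continuous_circleMap 0 r).inv₀ fun θ => circleMap_ne_center hr)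

set_option maxHeartbeats 1000000 in
lemma hasDerivAt_int (A B : ℕ) {u₀ : ℂ} (hu : u₀ ≠ 1) :
    HasDerivAt (fun u => ∮ z in C(0, ‖1 - u₀‖ / 2), FF A B u z)
      (∮ z in C(0, ‖1 - u₀‖ / 2),
        (↑A * gg u₀ z ^ (A - 1) * (-(gg u₀ z - 1) ^ 2)) * hh z ^ B) u₀ := by
  have hd0 : 0 < ‖1 - u₀‖ := by
    exact norm_pos_iff.2 (sub_ne_zero.2 (Ne.symm hu))
  set d := ‖1 - u₀‖ with hdd
  set r : ℝ := d / 2 with hrr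
  have hr0 : 0 < r := by positivity
  have hzabs : ∀ θ : ℝ, ‖circleMap 0 r θ‖ = r := by
    intro θ; rw [norm_circleMap_zero, abs_of_pos hr0]
  have key : ∀ x ∈ ball u₀ (d / 4), ∀ θ : ℝ,
      d / 4 ≤ ‖x + circleMap 0 r θ - 1‖ := by
    intro x hx θ
    rw [mem_ball, Complex.dist_eq] at hx
    set z := circleMap 0 r θ with hz
    have hza : ‖z‖ = r := hzabs θ
    by_contra hcon
    push_neg at hcon
    have hle : d ≤ ‖x + z - 1‖ + ‖x - u₀‖ + ‖z‖ := by
      have e : (1 - u₀ : ℂ) = -(x + z - 1) + (x - u₀) + z := by ring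
      calc d = ‖-(x + z - 1) + (x - u₀) + z‖ := by rw [hdd, ← e]
        _ ≤ ‖-(x + z - 1) + (x - u₀)‖ + ‖z‖ := norm_add_le _ _
        _ ≤ ‖-(x + z - 1)‖ + ‖x - u₀‖ + ‖z‖ := by
            gcongr; exact norm_add_le _ _
        _ = ‖x + z - 1‖ + ‖x - u₀‖ + ‖z‖ := by
            rw [norm_neg]
    rw [hza, hrr] at hle
    linarith
  have hne : ∀ x ∈ ball u₀ (d / 4), ∀ θ : ℝ, x + circleMap 0 r θ - 1 ≠ 0 := by
    intro x hx θ h0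
    have hk := key x hx θ
    rw [h0, norm_zero] at hk
    linarith
  have hu₀ : u₀ ∈ ball u₀ (d / 4) := mem_ball_self (by positivity)
  have contF : ∀ x ∈ ball u₀ (d / 4), Continuous fun θ : ℝ =>
      (circleMap 0 r θ * I) • FF A B x (circleMap 0 r θ) := by
    intro x hx
    simp only [FF]
    exact ((continuous_circleMap 0 r).mul continuous_const).smul
      (((cont_gg (hne x hx)).pow A).mul ((cont_hh hr0.ne').pow B))
  have contF' : Continuous fun θ : ℝ => (circleMap 0 r θ * I) •
      ((↑A * gg u₀ (circleMap 0 r θ) ^ (A - 1) * (-(gg u₀ (circleMap 0 r θ) - 1) ^ 2))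
        * hh (circleMap 0 r θ) ^ B) := by
    exact ((continuous_circleMap 0 r).mul continuous_const).smul
      (((continuous_const.mul ((cont_gg (hne u₀ hu₀)).pow (A - 1))).mul
        ((((cont_gg (hne u₀ hu₀)).sub continuous_const).pow 2).neg)).mul
          ((cont_hh hr0.ne').pow B))
  set Cb : ℝ := r * ((A : ℝ) * (1 + 4 / d) ^ (A - 1) * (4 / d) ^ 2 * (1 + 2 / d) ^ B) with hCb
  have main := intervalIntegral.hasDerivAt_integral_of_dominated_loc_of_deriv_le
    (μ := MeasureTheory.volume) (a := 0) (b := 2 * Real.pi) (x₀ := u₀)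
    (F := fun x θ => (circleMap 0 r θ * I) • FF A B x (circleMap 0 r θ))
    (F' := fun x θ => (circleMap 0 r θ * I) •
      ((↑A * gg x (circleMap 0 r θ) ^ (A - 1) * (-(gg x (circleMap 0 r θ) - 1) ^ 2))
        * hh (circleMap 0 r θ) ^ B))
    (bound := fun _ => Cb)
    (ball_mem_nhds u₀ (show (0:ℝ) < d / 4 by positivity))
    (by
      filter_upwards [ball_mem_nhds u₀ (show (0:ℝ) < d / 4 by positivity)] with x hx
      exact (contF x hx).aestronglyMeasurable.restrict)
    ((contF u₀ hu₀).intervalIntegrable _ _)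
    (by exact contF'.aestronglyMeasurable.restrict)
    (MeasureTheory.ae_of_all _ (by
      intro θ _ x hx
      have hgg1 : ‖gg x (circleMap 0 r θ) - 1‖ ≤ 4 / d := by
        have e : gg x (circleMap 0 r θ) - 1 = (x + circleMap 0 r θ - 1)⁻¹ := by
          simp [gg]
        rw [e, norm_inv]
        rw [show (4 / d : ℝ) = (d / 4)⁻¹ by rw [inv_div]]
        exact inv_anti₀ (by positivity) (key x hx θ)
      have hgg : ‖gg x (circleMap 0 r θ)‖ ≤ 1 + 4 / d := by
        have e : gg x (circleMap 0 r θ) = 1 + (gg x (circleMap 0 r θ) - 1) := by ring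
        rw [e]
        refine (norm_add_le _ _).trans ?_
        rw [norm_one]
        linarith [hgg1]
      have hhh : ‖hh (circleMap 0 r θ)‖ ≤ 1 + 2 / d := by
        simp only [hh]
        refine (norm_sub_le _ _).trans ?_
        rw [norm_one, norm_inv, hzabs θ, hrr]
        rw [show ((d/2 : ℝ))⁻¹ = 2 / d by rw [inv_div]]
      rw [norm_smul, norm_mul, Complex.norm_I, mul_one, hzabs θ, hCb]
      simp only [norm_mul, norm_neg, norm_pow, Complex.norm_natCast]
      gcongr))
    intervalIntegrable_const
    (MeasureTheory.ae_of_all _ (by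
      intro θ _ x hx
      exact (hasDerivAt_FF_u A B (hne x hx θ)).const_smul (circleMap 0 r θ * I)))
  simp only [circleIntegral, deriv_circleMap]
  exact main.2

lemma oint_combB (A B : ℕ) {u : ℂ} {r : ℝ} (h0 : 0 ≤ r) (hr : r < ‖1 - u‖) :
    (∮ z in C(0, r), (FF A (B + 1) u z - (2 * FF A B u z - FF A (B - 1) u z)))
      = (∮ z in C(0, r), FF A (B + 1) u z)
        - (2 * (∮ z in C(0, r), FF A B u z) - ∮ z in C(0, r), FF A (B - 1) u z) := by
  have i1 := circleIntegrable_FF A (B + 1) h0 hr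
  have i2 := circleIntegrable_FF A B h0 hr
  have i3 := circleIntegrable_FF A (B - 1) h0 hr
  have i2' : CircleIntegrable (fun z => 2 * FF A B u z) 0 r := by
    unfold CircleIntegrable at i2 ⊢; exact i2.const_mul 2
  have i4 : CircleIntegrable (fun z => 2 * FF A B u z - FF A (B - 1) u z) 0 r := by
    unfold CircleIntegrable at i2' i3 ⊢; exact i2'.sub i3
  rw [circleIntegral.integral_sub i1 i4, circleIntegral.integral_sub i2' i3,
    circleIntegral.integral_const_mul]

lemma diffAt_FF (A B : ℕ) (u : ℂ) {z : ℂ} (h0 : z ≠ 0) (h1 : u + z - 1 ≠ 0) :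
    DifferentiableAt ℂ (FF A B u) z := (hasDerivAt_FF_z A B u h0 h1).differentiableAt

lemma radius_indep (A B : ℕ) {u : ℂ} {r₁ r₂ : ℝ} (h1 : 0 < r₁) (h2 : r₁ ≤ r₂)
    (h3 : r₂ < ‖1 - u‖) :
    (∮ z in C(0, r₂), FF A B u z) = ∮ z in C(0, r₁), FF A B u z := by
  have hdiff : ∀ z ∈ closedBall (0:ℂ) r₂ \ ball (0:ℂ) r₁, DifferentiableAt ℂ (FF A B u) z := by
    intro z hz
    rw [mem_diff, mem_closedBall_zero_iff, mem_ball_zero_iff] at hz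
    push_neg at hz
    have h0 : z ≠ 0 := by
      intro h'; rw [h', norm_zero] at hz; linarith [hz.2]
    have habs : ‖z‖ ≤ r₂ := hz.1
    exact diffAt_FF A B u h0 (aux_ne (lt_of_le_of_lt habs h3))
  exact circleIntegral_eq_of_differentiable_on_annulus_off_countable h1 h2 Set.countable_empty
    (fun z hz => (hdiff z hz).continuousAt.continuousWithinAt)
    (fun z hz => hdiff z ⟨ball_subset_closedBall hz.1.1,
      fun hm => hz.1.2 (ball_subset_closedBall hm)⟩)

lemma two_radius (A B : ℕ) {u : ℂ} {r₁ r₂ : ℝ} (h1 : 0 < r₁)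
    (h1' : r₁ < ‖1 - u‖) (h2 : 0 < r₂) (h2' : r₂ < ‖1 - u‖) :
    (∮ z in C(0, r₁), FF A B u z) = ∮ z in C(0, r₂), FF A B u z := by
  rcases le_total r₁ r₂ with h | h
  · exact (radius_indep A B h1 h h2').symm
  · exact radius_indep A B h2 h h1'

lemma abs_pos_of_ne {u : ℂ} (hu : u ≠ 1) : 0 < ‖1 - u‖ := by
  exact norm_pos_iff.2 (sub_ne_zero.2 (Ne.symm hu))

lemma f_eventuallyEq (A B : ℕ) {u₀ : ℂ} (hu : u₀ ≠ 1) :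
    f A B =ᶠ[𝓝 u₀]
      fun u => (2 * Real.pi * Complex.I)⁻¹ *
        ∮ z in C(0, ‖1 - u₀‖ / 2), FF A B u z := by
  have hd0 : 0 < ‖1 - u₀‖ := abs_pos_of_ne hu
  have hopen : IsOpen {u : ℂ | ‖1 - u₀‖ / 2 < ‖1 - u‖} :=
    isOpen_lt continuous_const (continuous_norm.comp (continuous_const.sub continuous_id))
  have hmem : {u : ℂ | ‖1 - u₀‖ / 2 < ‖1 - u‖} ∈ 𝓝 u₀ :=
    hopen.mem_nhds (show ‖1 - u₀‖ / 2 < ‖1 - u₀‖ by linarith)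
  filter_upwards [hmem] with u hu'
  have hdu : 0 < ‖1 - u‖ := by linarith
  have e : f A B u = (2 * Real.pi * Complex.I)⁻¹ *
      ∮ z in C(0, ‖1 - u‖ / 2), FF A B u z := rfl
  rw [e, two_radius A B (r₁ := ‖1 - u‖ / 2) (r₂ := ‖1 - u₀‖ / 2)
    (by positivity) (by linarith) (by positivity) (by linarith)]

lemma hasDerivAt_fA (A B : ℕ) {u : ℂ} (hu : u ≠ 1) :
    HasDerivAt (f A B)
      (-(A : ℂ) * (f (A + 1) B u - (2 * f A B u - f (A - 1) B u))) u := by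
  have hd0 : 0 < ‖1 - u‖ := abs_pos_of_ne hu
  have h := ((hasDerivAt_int A B hu).const_mul
    ((2 * Real.pi * Complex.I)⁻¹)).congr_of_eventuallyEq (f_eventuallyEq A B hu)
  rw [circleIntegral.integral_congr (by positivity) (fun z _ => expandA A B u z),
    circleIntegral.integral_const_mul,
    oint_comb A B (by positivity) (by linarith)] at h
  have ef : ∀ X Y : ℕ, f X Y u = (2 * Real.pi * Complex.I)⁻¹ *
      ∮ z in C(0, ‖1 - u‖ / 2), FF X Y u z := fun X Y => rfl
  refine h.congr_deriv ?_
  rw [ef, ef, ef]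
  ring

lemma swap_AB (A B : ℕ) {u : ℂ} (hu : u ≠ 1) :
    -(A : ℂ) * (f (A + 1) B u - (2 * f A B u - f (A - 1) B u))
      = -(B : ℂ) * (f A (B + 1) u - (2 * f A B u - f A (B - 1) u)) := by
  have hd0 : 0 < ‖1 - u‖ := abs_pos_of_ne hu
  set r : ℝ := ‖1 - u‖ / 2 with hrr
  have hr0 : 0 < r := by positivity
  have hrlt : r < ‖1 - u‖ := by rw [hrr]; linarith
  have hzero : (∮ z in C(0, r),
      ((↑A * gg u z ^ (A - 1) * (-(gg u z - 1) ^ 2)) * hh z ^ B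
        + gg u z ^ A * (↑B * hh z ^ (B - 1) * ((hh z - 1) ^ 2)))) = 0 := by
    apply circleIntegral.integral_eq_zero_of_hasDerivWithinAt hr0.le
    intro z hz
    rw [mem_sphere_zero_iff_norm] at hz
    have h0 : z ≠ 0 := by
      intro h'; rw [h', norm_zero] at hz; exact hr0.ne hz
    have habs : ‖z‖ = r := hz
    exact (hasDerivAt_FF_z A B u h0
      (aux_ne (by rw [habs]; exact hrlt))).hasDerivWithinAt
  have e : EqOn
      (fun z => (↑A * gg u z ^ (A - 1) * (-(gg u z - 1) ^ 2)) * hh z ^ B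
        + gg u z ^ A * (↑B * hh z ^ (B - 1) * ((hh z - 1) ^ 2)))
      (fun z => -(A : ℂ) * (FF (A + 1) B u z - (2 * FF A B u z - FF (A - 1) B u z))
        - (-(B : ℂ)) * (FF A (B + 1) u z - (2 * FF A B u z - FF A (B - 1) u z)))
      (sphere (0:ℂ) r) := by
    intro z _
    simp only
    rw [expandA, expandB]
    ring
  have iFF : ∀ X Y : ℕ, CircleIntegrable (FF X Y u) 0 r :=
    fun X Y => circleIntegrable_FF X Y hr0.le hrlt
  have hI1 : CircleIntegrable (fun z => -(A : ℂ) *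
      (FF (A + 1) B u z - (2 * FF A B u z - FF (A - 1) B u z))) 0 r := by
    have a1 := iFF (A + 1) B; have a2 := iFF A B; have a3 := iFF (A - 1) B
    unfold CircleIntegrable at a1 a2 a3 ⊢
    exact (a1.sub ((a2.const_mul 2).sub a3)).const_mul _
  have hI2 : CircleIntegrable (fun z => (-(B : ℂ)) *
      (FF A (B + 1) u z - (2 * FF A B u z - FF A (B - 1) u z))) 0 r := by
    have a1 := iFF A (B + 1); have a2 := iFF A B; have a3 := iFF A (B - 1)
    unfold CircleIntegrable at a1 a2 a3 ⊢
    exact (a1.sub ((a2.const_mul 2).sub a3)).const_mul _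
  rw [circleIntegral.integral_congr hr0.le e, circleIntegral.integral_sub hI1 hI2,
    circleIntegral.integral_const_mul, circleIntegral.integral_const_mul,
    oint_comb A B hr0.le hrlt, oint_combB A B hr0.le hrlt] at hzero
  have ef : ∀ X Y : ℕ, f X Y u = (2 * Real.pi * Complex.I)⁻¹ *
      ∮ z in C(0, r), FF X Y u z := fun X Y => rfl
  rw [ef, ef, ef, ef, ef]
  linear_combination (2 * Real.pi * Complex.I)⁻¹ * hzero

lemma hasDerivAt_fB (A B : ℕ) {u : ℂ} (hu : u ≠ 1) :
    HasDerivAt (f A B)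
      (-(B : ℂ) * (f A (B + 1) u - (2 * f A B u - f A (B - 1) u))) u :=
  swap_AB A B hu ▸ hasDerivAt_fA A B hu

/-- Second-derivative identity (\ref{fAB-der-der}). -/
theorem stmt2 (A B : ℕ) (hA : 1 ≤ A) (hB : 1 ≤ B) (u : ℂ) (hu : u ≠ 1) :
    iteratedDeriv 2 (f A B) u =
      (A : ℂ) * (B : ℂ) *
        (f (A - 1) (B - 1) u + f (A - 1) (B + 1) u + f (A + 1) (B - 1) u
            + f (A + 1) (B + 1) u
          - 2 * f (A - 1) B u - 2 * f A (B - 1) u - 2 * f (A + 1) B u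
            - 2 * f A (B + 1) u
          + 4 * f A B u) := by
  have hopen : IsOpen {v : ℂ | v ≠ 1} := isOpen_compl_singleton
  have e1 : deriv (f A B) =ᶠ[𝓝 u]
      fun v => -(A : ℂ) * (f (A + 1) B v - (2 * f A B v - f (A - 1) B v)) := by
    filter_upwards [hopen.mem_nhds hu] with v hv
    exact (hasDerivAt_fA A B hv).deriv
  conv_lhs => rw [show (2 : ℕ) = 1 + 1 from rfl]
  rw [iteratedDeriv_succ, iteratedDeriv_one, Filter.EventuallyEq.deriv_eq e1]
  have H := HasDerivAt.const_mul (-(A : ℂ))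
    ((hasDerivAt_fB (A + 1) B hu).sub
      ((HasDerivAt.const_mul (2 : ℂ) (hasDerivAt_fB A B hu)).sub
        (hasDerivAt_fB (A - 1) B hu)))
  rw [HasDerivAt.deriv (f := fun v => -(A : ℂ) * (f (A + 1) B v - (2 * f A B v - f (A - 1) B v))) H]
  have hA1 : A - 1 + 1 = A := Nat.succ_pred_eq_of_pos hA
  ring
end

section
/- For every integer N ≥ 1 and every complex u ≠ 1, one has N·[ f_{N,N}(u) − f_{N,N−1}(u) ] = ((1−u)/2)·f'_{N,N}(u) + f_{N,N}(u)/2 − N/2, where f'_{N,N}(u) denotes the derivative of u ↦ f_{N,N}(u) at u. -/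
open Complex Metric Finset

noncomputable def cInt (a : ℂ) (r : ℝ) (j k : ℕ) : ℂ :=
  ∮ z in C(0, r), (z - a) ^ (-(j : ℤ)) * z ^ (-(k : ℤ))

noncomputable def g (A B : ℕ) (u : ℂ) : ℂ :=
  -(B : ℂ) + ∑ j ∈ Finset.range A, ∑ k ∈ Finset.range B,
    (A.choose (j+1) : ℂ) * (B.choose (k+1) : ℂ) * ((j+k).choose k : ℂ)
      * (-1) ^ (j+k) * ((1-u) ^ (j+k+1))⁻¹

theorem circleIntegral_finset_sum {ι : Type*} (s : Finset ι) (F : ι → ℂ → ℂ) (c : ℂ) (R : ℝ)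
    (h : ∀ i ∈ s, CircleIntegrable (F i) c R) :
    (∮ z in C(c, R), ∑ i ∈ s, F i z) = ∑ i ∈ s, ∮ z in C(c, R), F i z := by
  simp only [circleIntegral, Finset.smul_sum]
  exact intervalIntegral.integral_finset_sum fun i hi => (h i hi).out

section

variable {a : ℂ} {r : ℝ}

theorem sphere_ne_zero (hr : 0 < r) {z : ℂ} (hz : z ∈ sphere (0:ℂ) r) : z ≠ 0 := by
  rw [mem_sphere_zero_iff_norm] at hz
  intro h; rw [h] at hz; simp at hz; exact hr.ne' hz.symm

theorem sphere_sub_ne (ha : r < ‖a‖) {z : ℂ} (hz : z ∈ sphere (0:ℂ) r) : z - a ≠ 0 := by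
  rw [mem_sphere_zero_iff_norm] at hz
  intro h
  rw [sub_eq_zero] at h
  rw [h] at hz
  exact absurd hz (by linarith)

theorem cInt_integrable (hr : 0 < r) (ha : r < ‖a‖) (n m : ℤ) :
    CircleIntegrable (fun z => (z - a) ^ n * z ^ m) 0 r := by
  apply ContinuousOn.circleIntegrable hr.le
  intro z hz
  have h0 := sphere_ne_zero hr hz
  have h1 := sphere_sub_ne ha hz
  exact (((continuousAt_id.sub continuousAt_const).zpow₀ n (Or.inl h1)).mul
    (continuousAt_id.zpow₀ m (Or.inl h0))).continuousWithinAt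

theorem cInt_j_zero (hr : 0 < r) (ha : r < ‖a‖) (j : ℕ) : cInt a r j 0 = 0 := by
  have : cInt a r j 0 = ∮ z in C(0, r), (z - a) ^ (-(j:ℤ)) := by
    unfold cInt
    refine circleIntegral.integral_congr hr.le fun z hz => ?_
    simp
  rw [this]
  apply Complex.circleIntegral_eq_zero_of_differentiable_on_off_countable hr.le
    Set.countable_empty
  · intro z hz
    have h1 : z - a ≠ 0 := by
      rw [mem_closedBall_zero_iff] at hz
      intro h; rw [sub_eq_zero] at h; rw [h] at hz; linarith
    exact ((continuousAt_id.sub continuousAt_const).zpow₀ _ (Or.inl h1)).continuousWithinAt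
  · intro z hz
    have h1 : z - a ≠ 0 := by
      rw [Set.mem_diff, mem_ball_zero_iff] at hz
      intro h; rw [sub_eq_zero] at h; rw [h] at hz; linarith [hz.1]
    exact (differentiableAt_id.sub (differentiableAt_const a)).zpow (Or.inl h1)

theorem cInt_zero_k (hr : 0 < r) (k : ℕ) :
    cInt a r 0 k = if k = 1 then 2 * Real.pi * Complex.I else 0 := by
  have : cInt a r 0 k = ∮ z in C(0, r), (z - 0) ^ (-(k:ℤ)) := by
    unfold cInt
    refine circleIntegral.integral_congr hr.le fun z hz => ?_
    simp
  rw [this]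
  split_ifs with h
  · subst h
    have := circleIntegral.integral_sub_inv_of_mem_ball (c := (0:ℂ)) (w := 0) (R := r)
      (by simpa using hr)
    simpa using this
  · exact circleIntegral.integral_sub_zpow_of_ne (by omega) _ _ _

theorem cInt_rec (hr : 0 < r) (ha : r < ‖a‖) (j k : ℕ) :
    cInt a r (j+1) (k+1) = a⁻¹ * (cInt a r (j+1) k - cInt a r j (k+1)) := by
  have ha0 : a ≠ 0 := by
    intro h; rw [h] at ha; simp at ha; linarith
  have key : (∮ z in C(0, r), (z - a) ^ (-(j+1 : ℤ)) * z ^ (-(k+1 : ℤ)))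
      = ∮ z in C(0, r), a⁻¹ * ((z - a) ^ (-(j+1 : ℤ)) * z ^ (-(k : ℤ))
        - (z - a) ^ (-(j : ℤ)) * z ^ (-(k+1 : ℤ))) := by
    refine circleIntegral.integral_congr hr.le fun z hz => ?_
    have h0 := sphere_ne_zero hr hz
    have h1 := sphere_sub_ne ha hz
    have e1 : (z - a) ^ (-(j:ℤ)) = (z - a) ^ (1 + -((j:ℤ)+1)) := by congr 1; ring
    have e2 : (z : ℂ) ^ (-(k:ℤ)) = z ^ (1 + -((k:ℤ)+1)) := by congr 1; ring
    rw [e1, e2, zpow_add₀ h1, zpow_add₀ h0, zpow_one, zpow_one]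
    field_simp
    ring
  unfold cInt
  push_cast
  rw [key, circleIntegral.integral_const_mul]
  congr 1
  rw [circleIntegral.integral_sub (cInt_integrable hr ha _ _) (cInt_integrable hr ha _ _)]

theorem cInt_val (hr : 0 < r) (ha : r < ‖a‖) (j k : ℕ) :
    cInt a r (j+1) (k+1)
      = 2 * Real.pi * Complex.I * (-1) ^ (j+1) * ((j+k).choose k : ℂ)
          * (a ^ (j+k+1))⁻¹ := by
  have ha0 : a ≠ 0 := by
    intro h; rw [h] at ha; simp at ha; linarith
  induction j generalizing k with
  | zero =>
    induction k with
    | zero =>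
      rw [cInt_rec hr ha, cInt_j_zero hr ha, cInt_zero_k hr]
      simp only [if_pos rfl, if_true]
      field_simp
      simp only [Nat.add_zero, Nat.choose_self, Nat.cast_one]
      ring
    | succ k ihk =>
      rw [cInt_rec hr ha, ihk, cInt_zero_k hr]
      rw [if_neg (by omega : ¬ k + 1 + 1 = 1)]
      simp only [Nat.zero_add, Nat.choose_self, Nat.cast_one, pow_succ]
      rw [mul_inv]
      ring
  | succ j ihj =>
    induction k with
    | zero =>
      rw [cInt_rec hr ha, cInt_j_zero hr ha, ihj 0]
      simp only [Nat.add_zero, Nat.choose_zero_right]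
      field_simp
      ring
    | succ k ihk =>
      rw [cInt_rec hr ha, ihk, ihj (k+1)]
      have hp : ((j+1+(k+1)).choose (k+1) : ℂ)
          = ((j+1+k).choose k : ℂ) + ((j+(k+1)).choose (k+1) : ℂ) := by
        rw [show j+1+(k+1) = (j+k+1)+1 by ring, Nat.choose_succ_succ (j+k+1) k]
        push_cast [show j+1+k = j+k+1 by ring, show j+(k+1) = j+k+1 by ring]
        ring
      rw [hp]
      have e1 : j+1+(k+1)+1 = (j+1+k+1)+1 := by ring
      have e2 : j+(k+1)+1 = j+1+k+1 := by ring
      rw [e1, e2, pow_succ]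
      field_simp
      ring

end

section
variable {a : ℂ} {r : ℝ}

theorem cInt_integrable' (hr : 0 < r) (ha : r < ‖a‖) (c : ℂ) (n m : ℤ) :
    CircleIntegrable (fun z => c * ((z - a) ^ n * z ^ m)) 0 r := by
  apply ContinuousOn.circleIntegrable hr.le
  intro z hz
  have h0 := sphere_ne_zero hr hz
  have h1 := sphere_sub_ne ha hz
  exact (continuousAt_const.mul (((continuousAt_id.sub continuousAt_const).zpow₀ n
    (Or.inl h1)).mul (continuousAt_id.zpow₀ m (Or.inl h0)))).continuousWithinAt

end


theorem CircleIntegrable.finset_sum {ι : Type*} (s : Finset ι) (F : ι → ℂ → ℂ) {c : ℂ} {R : ℝ}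
    (h : ∀ i ∈ s, CircleIntegrable (F i) c R) :
    CircleIntegrable (fun z => ∑ i ∈ s, F i z) c R := by
  have := IntervalIntegrable.sum s (μ := MeasureTheory.volume)
    (f := fun i θ => F i (circleMap c R θ)) h
  rw [CircleIntegrable]
  rw [Finset.sum_fn] at this
  exact this

theorem two_pi_I_ne : (2 * Real.pi * Complex.I : ℂ) ≠ 0 := by
  simp [Real.pi_ne_zero, Complex.I_ne_zero]

theorem f_eq_cInt (A B : ℕ) {u : ℂ} (hu : u ≠ 1) :
    f A B u = (2 * Real.pi * Complex.I)⁻¹ *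
      ∑ j ∈ Finset.range (A+1), ∑ k ∈ Finset.range (B+1),
        (A.choose j : ℂ) * ((-1)^k * (B.choose k : ℂ)) * cInt (1-u) (‖1-u‖/2) j k := by
  set a : ℂ := 1 - u with ha_def
  have ha0 : a ≠ 0 := sub_ne_zero.mpr (Ne.symm hu)
  set r : ℝ := ‖1-u‖ / 2 with hr_def
  have hr : 0 < r := by
    have := norm_pos_iff.mpr ha0
    rw [hr_def]; exact by positivity
  have har : r < ‖a‖ := by
    have := norm_pos_iff.mpr ha0
    rw [hr_def]; linarith
  unfold f
  congr 1
  have step1 : (∮ z in C(0, r), (1 + (u + z - 1)⁻¹) ^ A * (1 - z⁻¹) ^ B)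
      = ∮ z in C(0, r), ∑ j ∈ Finset.range (A+1), ∑ k ∈ Finset.range (B+1),
          (A.choose j : ℂ) * ((-1)^k * (B.choose k : ℂ)) * ((z - a) ^ (-(j:ℤ)) * z ^ (-(k:ℤ))) := by
    refine circleIntegral.integral_congr hr.le fun z hz => ?_
    have h0 := sphere_ne_zero hr hz
    have h1 := sphere_sub_ne har hz
    have hz1 : u + z - 1 = z - a := by rw [ha_def]; ring
    rw [hz1]
    rw [show (1 : ℂ) + (z - a)⁻¹ = (z - a)⁻¹ + 1 by ring]
    rw [show (1 : ℂ) - z⁻¹ = -z⁻¹ + 1 by ring]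
    rw [add_pow, add_pow, Finset.sum_mul_sum]
    refine Finset.sum_congr rfl fun j hj => Finset.sum_congr rfl fun k hk => ?_
    rw [neg_pow]
    simp only [one_pow, mul_one, inv_pow, zpow_neg, zpow_natCast]
    ring
  rw [step1, circleIntegral_finset_sum]
  · refine Finset.sum_congr rfl fun j hj => ?_
    rw [circleIntegral_finset_sum]
    · refine Finset.sum_congr rfl fun k hk => ?_
      simp only [cInt]
      exact circleIntegral.integral_const_mul _ _ _ _
    · intro k hk
      exact cInt_integrable' hr har _ _ _
  · intro j hj
    exact CircleIntegrable.finset_sum _ _ fun k hk => cInt_integrable' hr har _ _ _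

theorem f_eq_g (A B : ℕ) {u : ℂ} (hu : u ≠ 1) : f A B u = g A B u := by
  have ha0 : (1 : ℂ) - u ≠ 0 := sub_ne_zero.mpr (Ne.symm hu)
  have habs := norm_pos_iff.mpr ha0
  set r : ℝ := ‖1-u‖ / 2 with hr_def
  have hr : 0 < r := by rw [hr_def]; positivity
  have har : r < ‖1-u‖ := by rw [hr_def]; linarith
  rw [f_eq_cInt A B hu]
  have key : (∑ j ∈ Finset.range (A+1), ∑ k ∈ Finset.range (B+1),
      (A.choose j : ℂ) * ((-1)^k * (B.choose k : ℂ)) * cInt (1-u) r j k)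
      = (2 * Real.pi * Complex.I) * g A B u := by
    rw [Finset.sum_range_succ']
    have hF0 : (∑ k ∈ Finset.range (B+1),
        (A.choose 0 : ℂ) * ((-1)^k * (B.choose k : ℂ)) * cInt (1-u) r 0 k)
        = -(B:ℂ) * (2 * Real.pi * Complex.I) := by
      have : ∀ k ∈ Finset.range (B+1),
          (A.choose 0 : ℂ) * ((-1)^k * (B.choose k : ℂ)) * cInt (1-u) r 0 k
          = if k = 1 then -(B:ℂ) * (2 * Real.pi * Complex.I) else 0 := by
        intro k hk
        rw [cInt_zero_k hr]
        split_ifs with h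
        · subst h; simp [Nat.choose_one_right]
        · simp
      rw [Finset.sum_congr rfl this, Finset.sum_ite_eq' (Finset.range (B+1)) 1]
      cases B with
      | zero => simp
      | succ B => rw [if_pos (by simp)]
    have hFj : ∀ j ∈ Finset.range A, (∑ k ∈ Finset.range (B+1),
        (A.choose (j+1) : ℂ) * ((-1)^k * (B.choose k : ℂ)) * cInt (1-u) r (j+1) k)
        = (2 * Real.pi * Complex.I) * ∑ k ∈ Finset.range B,
            (A.choose (j+1) : ℂ) * (B.choose (k+1) : ℂ) * ((j+k).choose k : ℂ)
              * (-1) ^ (j+k) * ((1-u) ^ (j+k+1))⁻¹ := by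
      intro j hj
      rw [Finset.sum_range_succ', cInt_j_zero hr har]
      rw [Finset.mul_sum]
      simp only [mul_zero, add_zero]
      refine Finset.sum_congr rfl fun k hk => ?_
      rw [cInt_val hr har]
      ring
    rw [hF0, Finset.sum_congr rfl hFj, g, ← Finset.mul_sum]
    ring
  rw [key, inv_mul_cancel_left₀ two_pi_I_ne]

theorem hasDerivAt_aux (m : ℕ) {u : ℂ} (hu1 : (1:ℂ) - u ≠ 0) :
    HasDerivAt (fun u : ℂ => ((1-u) ^ m)⁻¹) ((m:ℂ) * ((1-u) ^ (m+1))⁻¹) u := by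
  have h1 : HasDerivAt (fun u : ℂ => 1 - u) (-1) u := (hasDerivAt_id u).const_sub 1
  have h2 := (hasDerivAt_zpow (-(m:ℤ)) (1-u) (Or.inl hu1)).comp u h1
  have h3 : (fun u : ℂ => ((1-u) ^ m)⁻¹) = fun u : ℂ => (1-u) ^ (-(m:ℤ)) := by
    funext v; rw [zpow_neg, zpow_natCast]
  rw [h3]
  refine h2.congr_deriv ?_
  rw [show (-(m:ℤ)-1) = -(((m+1:ℕ)):ℤ) by push_cast; ring, zpow_neg, zpow_natCast]
  push_cast
  ring

theorem g_hasDerivAt (A B : ℕ) {u : ℂ} (hu1 : (1:ℂ) - u ≠ 0) :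
    HasDerivAt (g A B)
      (∑ j ∈ Finset.range A, ∑ k ∈ Finset.range B,
        (A.choose (j+1) : ℂ) * (B.choose (k+1) : ℂ) * ((j+k).choose k : ℂ)
          * (-1) ^ (j+k) * (((j+k+1 : ℕ)):ℂ) * ((1-u) ^ (j+k+2))⁻¹) u := by
  unfold g
  apply HasDerivAt.const_add
  apply HasDerivAt.fun_sum
  intro j hj
  apply HasDerivAt.fun_sum
  intro k hk
  have := (hasDerivAt_aux (j+k+1) hu1).const_mul
    ((A.choose (j+1) : ℂ) * (B.choose (k+1) : ℂ) * ((j+k).choose k : ℂ) * (-1) ^ (j+k))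
  refine this.congr_deriv ?_
  push_cast
  ring

theorem sum_sym_half (n : ℕ) (F : ℕ → ℕ → ℂ) (hsym : ∀ j k, F j k = F k j) :
    ∑ j ∈ Finset.range n, ∑ k ∈ Finset.range n, ((k:ℂ)+1) * F j k
      = ∑ j ∈ Finset.range n, ∑ k ∈ Finset.range n, (((j:ℂ)+(k:ℂ)+2)/2) * F j k := by
  have h1 : ∑ j ∈ Finset.range n, ∑ k ∈ Finset.range n, ((k:ℂ)+1) * F j k
      = ∑ j ∈ Finset.range n, ∑ k ∈ Finset.range n, ((j:ℂ)+1) * F j k := by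
    rw [Finset.sum_comm]
    exact Finset.sum_congr rfl fun j _ => Finset.sum_congr rfl fun k _ => by rw [hsym]
  have h2 : ∑ j ∈ Finset.range n, ∑ k ∈ Finset.range n, (((j:ℂ)+(k:ℂ)+2)/2) * F j k
      = (∑ j ∈ Finset.range n, ∑ k ∈ Finset.range n, (((k:ℂ)+1) * F j k + ((j:ℂ)+1) * F j k))/2 := by
    rw [Finset.sum_div]
    refine Finset.sum_congr rfl fun j _ => ?_
    rw [Finset.sum_div]
    exact Finset.sum_congr rfl fun k _ => by ring
  rw [h2]
  have h3 : (∑ j ∈ Finset.range n, ∑ k ∈ Finset.range n,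
        (((k:ℂ)+1) * F j k + ((j:ℂ)+1) * F j k))
      = (∑ j ∈ Finset.range n, ∑ k ∈ Finset.range n, ((k:ℂ)+1) * F j k)
        + ∑ j ∈ Finset.range n, ∑ k ∈ Finset.range n, ((j:ℂ)+1) * F j k := by
    rw [← Finset.sum_add_distrib]
    exact Finset.sum_congr rfl fun j _ => Finset.sum_add_distrib
  rw [h3, ← h1]
  ring

/-- Relation (\ref{feat-2}):
`N[f_{N,N} − f_{N,N−1}] = ((1−u)/2) ∂_u f_{N,N} + f_{N,N}/2 − N/2`. -/
theorem stmt8 (N : ℕ) (hN : 1 ≤ N) (u : ℂ) (hu : u ≠ 1) :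
    (N : ℂ) * (f N N u - f N (N - 1) u) =
      ((1 - u) / 2) * deriv (f N N) u + f N N u / 2 - (N : ℂ) / 2 := by
  obtain ⟨M, rfl⟩ : ∃ M, N = M + 1 := ⟨N - 1, (Nat.succ_pred_eq_of_pos hN).symm⟩
  have hu1 : (1:ℂ) - u ≠ 0 := sub_ne_zero.mpr (Ne.symm hu)
  -- replace deriv f by explicit sum
  have hderiv : deriv (f (M+1) (M+1)) u
      = ∑ j ∈ Finset.range (M+1), ∑ k ∈ Finset.range (M+1),
          (((M+1).choose (j+1)):ℂ) * (((M+1).choose (k+1)):ℂ) * (((j+k).choose k):ℂ)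
            * (-1)^(j+k) * ((j:ℂ)+(k:ℂ)+1) * ((1-u)^(j+k+2))⁻¹ := by
    have he : f (M+1) (M+1) =ᶠ[nhds u] g (M+1) (M+1) :=
      Filter.eventuallyEq_of_mem (isOpen_ne.mem_nhds hu) fun v hv => f_eq_g _ _ hv
    rw [he.deriv_eq, (g_hasDerivAt (M+1) (M+1) hu1).deriv]
    refine Finset.sum_congr rfl fun j _ => Finset.sum_congr rfl fun k _ => ?_
    push_cast
    ring
  have hsub : M + 1 - 1 = M := by omega
  rw [hsub, hderiv, f_eq_g _ _ hu, f_eq_g _ _ hu]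
  -- extend g (M+1) M inner sum
  have hgnM : g (M+1) M u = -(M:ℂ) + ∑ j ∈ Finset.range (M+1), ∑ k ∈ Finset.range (M+1),
      (((M+1).choose (j+1)):ℂ) * ((M.choose (k+1)):ℂ) * (((j+k).choose k):ℂ)
        * (-1)^(j+k) * ((1-u)^(j+k+1))⁻¹ := by
    rw [g]
    congr 1
    refine Finset.sum_congr rfl fun j _ => ?_
    rw [Finset.sum_range_succ]
    simp [Nat.choose_succ_self]
  -- LHS
  have hS12 : (∑ j ∈ Finset.range (M+1), ∑ k ∈ Finset.range (M+1),
        (((M+1).choose (j+1)):ℂ) * (((M+1).choose (k+1)):ℂ) * (((j+k).choose k):ℂ)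
          * (-1)^(j+k) * ((1-u)^(j+k+1))⁻¹)
      - (∑ j ∈ Finset.range (M+1), ∑ k ∈ Finset.range (M+1),
        (((M+1).choose (j+1)):ℂ) * ((M.choose (k+1)):ℂ) * (((j+k).choose k):ℂ)
          * (-1)^(j+k) * ((1-u)^(j+k+1))⁻¹)
      = ∑ j ∈ Finset.range (M+1), ∑ k ∈ Finset.range (M+1),
          ((((M+1).choose (j+1)):ℂ) * (((M+1).choose (k+1)):ℂ) * (((j+k).choose k):ℂ)
            * (-1)^(j+k) * ((1-u)^(j+k+1))⁻¹
          - (((M+1).choose (j+1)):ℂ) * ((M.choose (k+1)):ℂ) * (((j+k).choose k):ℂ)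
            * (-1)^(j+k) * ((1-u)^(j+k+1))⁻¹) := by
    rw [← Finset.sum_sub_distrib]
    exact Finset.sum_congr rfl fun j _ => (Finset.sum_sub_distrib _ _).symm
  have e1 : g (M+1) (M+1) u - g (M+1) M u
      = -1 + ∑ j ∈ Finset.range (M+1), ∑ k ∈ Finset.range (M+1),
          ((((M+1).choose (j+1)):ℂ) * (((M+1).choose (k+1)):ℂ) * (((j+k).choose k):ℂ)
            * (-1)^(j+k) * ((1-u)^(j+k+1))⁻¹
          - (((M+1).choose (j+1)):ℂ) * ((M.choose (k+1)):ℂ) * (((j+k).choose k):ℂ)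
            * (-1)^(j+k) * ((1-u)^(j+k+1))⁻¹) := by
    rw [← hS12]
    rw [g, hgnM]
    push_cast
    ring
  have hL : ((M+1:ℕ):ℂ) * (g (M+1) (M+1) u - g (M+1) M u)
      = -((M:ℂ)+1) + ∑ j ∈ Finset.range (M+1), ∑ k ∈ Finset.range (M+1),
          ((k:ℂ)+1) * ((((M+1).choose (j+1)):ℂ) * (((M+1).choose (k+1)):ℂ)
            * (((j+k).choose k):ℂ) * (-1)^(j+k) * ((1-u)^(j+k+1))⁻¹) := by
    rw [e1]
    have hT : ((M+1:ℕ):ℂ) * (∑ j ∈ Finset.range (M+1), ∑ k ∈ Finset.range (M+1),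
          ((((M+1).choose (j+1)):ℂ) * (((M+1).choose (k+1)):ℂ) * (((j+k).choose k):ℂ)
            * (-1)^(j+k) * ((1-u)^(j+k+1))⁻¹
          - (((M+1).choose (j+1)):ℂ) * ((M.choose (k+1)):ℂ) * (((j+k).choose k):ℂ)
            * (-1)^(j+k) * ((1-u)^(j+k+1))⁻¹))
        = ∑ j ∈ Finset.range (M+1), ∑ k ∈ Finset.range (M+1),
          ((k:ℂ)+1) * ((((M+1).choose (j+1)):ℂ) * (((M+1).choose (k+1)):ℂ)
            * (((j+k).choose k):ℂ) * (-1)^(j+k) * ((1-u)^(j+k+1))⁻¹) := by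
      rw [Finset.mul_sum]
      refine Finset.sum_congr rfl fun j _ => ?_
      rw [Finset.mul_sum]
      refine Finset.sum_congr rfl fun k _ => ?_
      have hc1 : (((M+1).choose (k+1)):ℂ) = ((M.choose k):ℂ) + ((M.choose (k+1)):ℂ) := by
        rw [Nat.choose_succ_succ]
        push_cast
        ring
      have hc2 : ((M:ℂ)+1) * ((M.choose k):ℂ) = (((M+1).choose (k+1)):ℂ) * ((k:ℂ)+1) := by
        exact_mod_cast Nat.add_one_mul_choose_eq M k
      push_cast
      linear_combination (((M:ℂ)+1) * (((M+1).choose (j+1)):ℂ) * (((j+k).choose k):ℂ)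
          * (-1:ℂ)^(j+k) * ((1-u)^(j+k+1))⁻¹) * hc1
        + ((((M+1).choose (j+1)):ℂ) * (((j+k).choose k):ℂ)
          * (-1:ℂ)^(j+k) * ((1-u)^(j+k+1))⁻¹) * hc2
    rw [mul_add, hT]
    push_cast
    ring
  -- RHS
  have hD : ((1-u)/2) * (∑ j ∈ Finset.range (M+1), ∑ k ∈ Finset.range (M+1),
        (((M+1).choose (j+1)):ℂ) * (((M+1).choose (k+1)):ℂ) * (((j+k).choose k):ℂ)
          * (-1)^(j+k) * ((j:ℂ)+(k:ℂ)+1) * ((1-u)^(j+k+2))⁻¹)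
      = ∑ j ∈ Finset.range (M+1), ∑ k ∈ Finset.range (M+1),
          (((j:ℂ)+(k:ℂ)+1)/2) * ((((M+1).choose (j+1)):ℂ) * (((M+1).choose (k+1)):ℂ)
            * (((j+k).choose k):ℂ) * (-1)^(j+k) * ((1-u)^(j+k+1))⁻¹) := by
    rw [Finset.mul_sum]
    refine Finset.sum_congr rfl fun j _ => ?_
    rw [Finset.mul_sum]
    refine Finset.sum_congr rfl fun k _ => ?_
    have hp : (1-u) * ((1-u)^(j+k+2))⁻¹ = ((1-u)^(j+k+1))⁻¹ := by
      rw [pow_succ, mul_inv]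
      field_simp
    linear_combination ((((M+1).choose (j+1)):ℂ) * (((M+1).choose (k+1)):ℂ)
        * (((j+k).choose k):ℂ) * (-1:ℂ)^(j+k) * ((j:ℂ)+(k:ℂ)+1) / 2) * hp
  have hcomb : (∑ j ∈ Finset.range (M+1), ∑ k ∈ Finset.range (M+1),
        (((j:ℂ)+(k:ℂ)+1)/2) * ((((M+1).choose (j+1)):ℂ) * (((M+1).choose (k+1)):ℂ)
          * (((j+k).choose k):ℂ) * (-1)^(j+k) * ((1-u)^(j+k+1))⁻¹))
      + (∑ j ∈ Finset.range (M+1), ∑ k ∈ Finset.range (M+1),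
          (((M+1).choose (j+1)):ℂ) * (((M+1).choose (k+1)):ℂ) * (((j+k).choose k):ℂ)
            * (-1)^(j+k) * ((1-u)^(j+k+1))⁻¹)/2
      = ∑ j ∈ Finset.range (M+1), ∑ k ∈ Finset.range (M+1),
          (((j:ℂ)+(k:ℂ)+2)/2) * ((((M+1).choose (j+1)):ℂ) * (((M+1).choose (k+1)):ℂ)
            * (((j+k).choose k):ℂ) * (-1)^(j+k) * ((1-u)^(j+k+1))⁻¹) := by
    rw [Finset.sum_div, ← Finset.sum_add_distrib]
    refine Finset.sum_congr rfl fun j _ => ?_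
    rw [Finset.sum_div, ← Finset.sum_add_distrib]
    refine Finset.sum_congr rfl fun k _ => ?_
    ring
  -- symmetry
  have hsym : ∀ j k : ℕ,
      (((M+1).choose (j+1)):ℂ) * (((M+1).choose (k+1)):ℂ) * (((j+k).choose k):ℂ)
        * (-1)^(j+k) * ((1-u)^(j+k+1))⁻¹
      = (((M+1).choose (k+1)):ℂ) * (((M+1).choose (j+1)):ℂ) * (((k+j).choose j):ℂ)
        * (-1)^(k+j) * ((1-u)^(k+j+1))⁻¹ := by
    intro j k
    have hch : (j+k).choose k = (k+j).choose j := by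
      rw [add_comm k j]
      rw [← Nat.choose_symm (Nat.le_add_left k j), Nat.add_sub_cancel]
    rw [hch, add_comm j k]
    ring
  have hsym2 := sum_sym_half (M+1)
    (fun j k => (((M+1).choose (j+1)):ℂ) * (((M+1).choose (k+1)):ℂ) * (((j+k).choose k):ℂ)
      * (-1)^(j+k) * ((1-u)^(j+k+1))⁻¹) hsym
  rw [hL, hD, hsym2, ← hcomb, g]
  push_cast
  ring
end
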